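/- For all vectors x, y ∈ ℝ⁸ one has ⟨x⌟Φ, y⌟Φ⟩ = 7⟨x,y⟩, where the left-hand side is the inner product of 3-forms. (This is the pointwise, Hodge-star-free form of the statement that the fundamental 4-form Φ determines the Euclidean metric.) -/

import Mathlib

open scoped BigOperators RealInnerProductSpace

noncomputable section

abbrev Form (n p : ℕ) := (Fin p → EuclideanSpace ℝ (Fin n)) → ℝ

namespace Form

/-- Wedge product of forms (shuffle convention; full antisymmetrization divided by p!q!). -/
def wedge {n p q : ℕ} (α : Form n p) (β : Form n q) : Form n (p + q) :=
  fun x =>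
    (((p.factorial * q.factorial : ℕ) : ℝ))⁻¹ *
      ∑ σ : Equiv.Perm (Fin (p + q)),
        ((Equiv.Perm.sign σ : ℤ) : ℝ) *
          (α fun i => x (σ (Fin.castAdd q i))) * (β fun j => x (σ (Fin.natAdd p j)))

/-- Inner product of `p`-forms. -/
def inner' {n p : ℕ} (α β : Form n p) : ℝ :=
  ((p.factorial : ℕ) : ℝ)⁻¹ *
    ∑ f : Fin p → Fin n,
      (α fun k => EuclideanSpace.single (f k) 1) * (β fun k => EuclideanSpace.single (f k) 1)

/-- Interior product of a vector and a form. -/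
def iprod {n p : ℕ} (v : EuclideanSpace ℝ (Fin n)) (α : Form n (p + 1)) : Form n p :=
  fun x => α (Fin.cons v x)

end Form

infixl:72 " ⋏ " => Form.wedge

/-- The 1-form dual to a vector. -/
def dual {n : ℕ} (v : EuclideanSpace ℝ (Fin n)) : Form n 1 := fun x => ⟪v, x 0⟫

abbrev E8 := EuclideanSpace ℝ (Fin 8)

/-- The basis vector `e`. -/
def e8 : E8 := EuclideanSpace.single 7 1

/-- The basis vectors `e₀,…,e₆` indexed mod 7. -/
def u7 (i : ZMod 7) : E8 := EuclideanSpace.single ⟨i.val, i.val_lt.trans (by norm_num)⟩ 1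

/-- The basis indexed by ℤ₈, with `e₇ = e`. -/
def u8 (i : ZMod 8) : E8 := EuclideanSpace.single ⟨i.val, i.val_lt⟩ 1

/-- The Spin(7) fundamental 4-form. -/
def Phi (σ : ℝ) : Form 8 4 := fun x =>
  (∑ i : ZMod 7, (dual e8 ⋏ dual (u7 i) ⋏ dual (u7 (i + 1)) ⋏ dual (u7 (i + 3))) x)
    - σ * ∑ i : ZMod 7,
        (dual (u7 (i + 2)) ⋏ dual (u7 (i + 4)) ⋏ dual (u7 (i + 5)) ⋏ dual (u7 (i + 6))) x

/-- The standard volume form of ℝ⁸. -/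
def vol8 : Form 8 8 :=
  dual e8 ⋏ dual (u7 0) ⋏ dual (u7 1) ⋏ dual (u7 2) ⋏ dual (u7 3) ⋏ dual (u7 4) ⋏ dual (u7 5)
    ⋏ dual (u7 6)

/-- The 2-forms spanning spin(7)ᗮ. -/
def beta (σ : ℝ) (i : ZMod 7) : Form 8 2 := fun x =>
  σ * (dual (u7 i) ⋏ dual e8) x + (dual (u7 (i + 1)) ⋏ dual (u7 (i + 3))) x
    + (dual (u7 (i + 4)) ⋏ dual (u7 (i + 5))) x + (dual (u7 (i + 2)) ⋏ dual (u7 (i + 6))) x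

-- === auxiliary definitions ===
def s8 (a : Fin 8) : E8 := EuclideanSpace.single a 1

def pf {p : ℕ} (v : Fin p → E8) : Form 8 p := fun x =>
  ∑ σ : Equiv.Perm (Fin p), ((Equiv.Perm.sign σ : ℤ) : ℝ) * ∏ i, ⟪v i, x (σ i)⟫

lemma inner_s8_left (a : Fin 8) (x : E8) : ⟪s8 a, x⟫ = x a := by
  simp [s8, EuclideanSpace.inner_single_left]

lemma inner_s8_s8 (a b : Fin 8) : ⟪s8 a, s8 b⟫ = if a = b then (1:ℝ) else 0 := by
  rw [inner_s8_left]; simp [s8, EuclideanSpace.single_apply]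

lemma inner_eq_sum (x y : E8) : ⟪x, y⟫ = ∑ a, x a * y a := by
  simp [PiLp.inner_apply, RCLike.inner_apply]
  exact Finset.sum_congr rfl fun _ _ => mul_comm _ _

lemma dual_eq_pf (u : E8) : dual u = pf ![u] := by
  have hu : ∀ σ : Equiv.Perm (Fin 1), σ = 1 := fun σ => Equiv.ext fun i => Subsingleton.elim _ _
  funext x
  show ⟪u, x 0⟫ = _
  rw [pf, Finset.sum_eq_single (1 : Equiv.Perm (Fin 1))
    (fun b _ hb => absurd (hu b) hb) (fun h => absurd (Finset.mem_univ _) h),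
    Fin.prod_univ_one]
  simp

section PfStep

variable {p : ℕ}

def epl (p : ℕ) : Fin p ≃ {i : Fin (p+1) // (i : ℕ) < p} where
  toFun j := ⟨Fin.castAdd 1 j, by simpa using j.isLt⟩
  invFun i := ⟨(i : Fin (p+1)).val, i.2⟩
  left_inv j := by ext; simp
  right_inv i := by ext; simp

def EE (σ : Equiv.Perm (Fin p)) : Equiv.Perm (Fin (p+1)) := σ.extendDomain (epl p)

lemma EE_castAdd (σ : Equiv.Perm (Fin p)) (i : Fin p) :
    EE σ (Fin.castAdd 1 i) = Fin.castAdd 1 (σ i) := by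
  have h := Equiv.Perm.extendDomain_apply_image σ (epl p) i
  simpa [EE, epl] using h

lemma EE_natAdd (σ : Equiv.Perm (Fin p)) : EE σ (Fin.natAdd p 0) = Fin.natAdd p 0 := by
  apply Equiv.Perm.extendDomain_apply_not_subtype
  simp [Fin.natAdd]

lemma EE_sign (σ : Equiv.Perm (Fin p)) : Equiv.Perm.sign (EE σ) = Equiv.Perm.sign σ :=
  Equiv.Perm.sign_extendDomain σ (epl p)

lemma last_eq_natAdd : (Fin.natAdd p (0 : Fin 1)) = Fin.last p := by
  ext; simp

lemma castSucc_eq_castAdd (i : Fin p) : Fin.castSucc i = Fin.castAdd 1 i := rfl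

lemma pf_step (v : Fin p → E8) (u : E8) : (pf v ⋏ dual u) = pf (Fin.snoc v u) := by
  funext x
  have hfac : ((p.factorial : ℕ) : ℝ) ≠ 0 := by
    exact_mod_cast Nat.factorial_ne_zero p
  -- the target family
  set F : Equiv.Perm (Fin (p+1)) → ℝ := fun ρ =>
    ((Equiv.Perm.sign ρ : ℤ) : ℝ) * ((∏ i : Fin p, ⟪v i, x (ρ (Fin.castAdd 1 i))⟫) *
      ⟪u, x (ρ (Fin.natAdd p 0))⟫) with hF
  have key : ∀ σ : Equiv.Perm (Fin p),
      (∑ τ : Equiv.Perm (Fin (p+1)),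
        ((Equiv.Perm.sign τ : ℤ) : ℝ) * ((Equiv.Perm.sign σ : ℤ) : ℝ) *
          ((∏ i : Fin p, ⟪v i, x (τ (Fin.castAdd 1 (σ i)))⟫) * ⟪u, x (τ (Fin.natAdd p 0))⟫))
      = ∑ ρ, F ρ := by
    intro σ
    rw [← Equiv.sum_comp (Equiv.mulRight (EE σ⁻¹))]
    apply Finset.sum_congr rfl
    intro ρ _
    have h1 : ∀ i : Fin p, (Equiv.mulRight (EE σ⁻¹) ρ) (Fin.castAdd 1 (σ i)) =
        ρ (Fin.castAdd 1 i) := by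
      intro i
      simp only [Equiv.coe_mulRight, Equiv.Perm.mul_apply, EE_castAdd]
      simp
    have h2 : (Equiv.mulRight (EE σ⁻¹) ρ) (Fin.natAdd p 0) = ρ (Fin.natAdd p 0) := by
      simp only [Equiv.coe_mulRight, Equiv.Perm.mul_apply, EE_natAdd]
    have h3 : ((Equiv.Perm.sign (Equiv.mulRight (EE σ⁻¹) ρ) : ℤ) : ℝ) *
        ((Equiv.Perm.sign σ : ℤ) : ℝ) = ((Equiv.Perm.sign ρ : ℤ) : ℝ) := by
      simp only [Equiv.coe_mulRight]
      rw [show ρ * (EE σ⁻¹) = ρ * (EE σ⁻¹) from rfl, Equiv.Perm.sign_mul, EE_sign,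
        Equiv.Perm.sign_inv]
      rcases Int.units_eq_one_or (Equiv.Perm.sign ρ) with h | h <;>
        rcases Int.units_eq_one_or (Equiv.Perm.sign σ) with h' | h' <;>
          simp [h, h']
    simp only [h1, h2, hF]
    rw [h3]
  calc (pf v ⋏ dual u) x
      = ((p.factorial * Nat.factorial 1 : ℕ) : ℝ)⁻¹ *
        ∑ τ : Equiv.Perm (Fin (p+1)),
          ((Equiv.Perm.sign τ : ℤ) : ℝ) *
            (∑ σ : Equiv.Perm (Fin p), ((Equiv.Perm.sign σ : ℤ) : ℝ) *
              ∏ i : Fin p, ⟪v i, x (τ (Fin.castAdd 1 (σ i)))⟫) *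
            ⟪u, x (τ (Fin.natAdd p 0))⟫ := rfl
    _ = ((p.factorial : ℕ) : ℝ)⁻¹ * ∑ σ : Equiv.Perm (Fin p),
          ∑ τ : Equiv.Perm (Fin (p+1)),
            ((Equiv.Perm.sign τ : ℤ) : ℝ) * ((Equiv.Perm.sign σ : ℤ) : ℝ) *
              ((∏ i : Fin p, ⟪v i, x (τ (Fin.castAdd 1 (σ i)))⟫) *
                ⟪u, x (τ (Fin.natAdd p 0))⟫) := by
        rw [Finset.sum_comm]
        congr 1
        · norm_num
        · apply Finset.sum_congr rfl; intro τ _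
          rw [Finset.mul_sum, Finset.sum_mul]
          apply Finset.sum_congr rfl; intro σ _
          ring
    _ = ((p.factorial : ℕ) : ℝ)⁻¹ * ∑ _σ : Equiv.Perm (Fin p), ∑ ρ, F ρ := by
        congr 1; exact Finset.sum_congr rfl (fun σ _ => key σ)
    _ = ∑ ρ, F ρ := by
        rw [Finset.sum_const, Finset.card_univ, Fintype.card_perm, Fintype.card_fin,
          nsmul_eq_mul]
        rw [← mul_assoc, inv_mul_cancel₀ hfac, one_mul]
    _ = pf (Fin.snoc v u) x := by
        rw [pf]
        apply Finset.sum_congr rfl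
        intro ρ _
        rw [Fin.prod_univ_castSucc]
        simp only [Fin.snoc_castSucc, Fin.snoc_last, hF]
        rw [← last_eq_natAdd]
        rfl

end PfStep
-- === integer side ===
def em8 (i : ZMod 7) : Fin 8 := ⟨i.val, i.val_lt.trans (by norm_num)⟩
def qA (i : ZMod 7) : Fin 4 → Fin 8 := ![7, em8 i, em8 (i+1), em8 (i+3)]
def qB (i : ZMod 7) : Fin 4 → Fin 8 := ![em8 (i+2), em8 (i+4), em8 (i+5), em8 (i+6)]
def esc : Fin 4 → Fin 3 → Fin 4 := ![![1,2,3], ![0,2,3], ![1,0,3], ![1,2,0]]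
def stz : Fin 4 → ℤ := ![1,-1,-1,-1]
def TT (t : Fin 4 → Fin 8) (k : Fin 4) : Fin 3 → Fin 8 := fun m => t (esc k m)
def dd3 (p q : Fin 3 → Fin 8) : ℤ :=
    (if p 0 = q 0 ∧ p 1 = q 1 ∧ p 2 = q 2 then 1 else 0)
  - (if p 0 = q 0 ∧ p 1 = q 2 ∧ p 2 = q 1 then 1 else 0)
  - (if p 0 = q 1 ∧ p 1 = q 0 ∧ p 2 = q 2 then 1 else 0)
  + (if p 0 = q 1 ∧ p 1 = q 2 ∧ p 2 = q 0 then 1 else 0)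
  + (if p 0 = q 2 ∧ p 1 = q 0 ∧ p 2 = q 1 then 1 else 0)
  - (if p 0 = q 2 ∧ p 1 = q 1 ∧ p 2 = q 0 then 1 else 0)
def Zs (g g' : ZMod 7 → Fin 4 → Fin 8) (a b : Fin 8) : ℤ :=
  ∑ i : ZMod 7, ∑ k : Fin 4, if g i k = a then
    stz k * ∑ i' : ZMod 7, ∑ k' : Fin 4, (if g' i' k' = b then
      stz k' * dd3 (TT (g i) k) (TT (g' i') k') else 0) else 0

-- === dd3_eq : the S3 sum evaluates to dd3 ===
section DD3
private def c0 : Equiv.Perm (Fin 3) := 1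
private def c1 : Equiv.Perm (Fin 3) := Equiv.swap 0 1
private def c2 : Equiv.Perm (Fin 3) := Equiv.swap 0 2
private def c3 : Equiv.Perm (Fin 3) := Equiv.swap 1 2
private def c4 : Equiv.Perm (Fin 3) := finRotate 3
private def c5 : Equiv.Perm (Fin 3) := (finRotate 3)⁻¹

private lemma ite3 (P Q R : Prop) [Decidable P] [Decidable Q] [Decidable R] :
    (if P then (1:ℝ) else 0) * ((if Q then (1:ℝ) else 0) * (if R then (1:ℝ) else 0))
      = if P ∧ Q ∧ R then (1:ℝ) else 0 := by
  by_cases hP : P <;> by_cases hQ : Q <;> by_cases hR : R <;> simp [hP, hQ, hR]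

lemma dd3_eq (p q : Fin 3 → Fin 8) :
    (∑ ρ : Equiv.Perm (Fin 3), ((Equiv.Perm.sign ρ : ℤ) : ℝ) *
        ∏ m : Fin 3, (if p m = q (ρ m) then (1:ℝ) else 0))
      = ((dd3 p q : ℤ) : ℝ) := by
  have huniv : (Finset.univ : Finset (Equiv.Perm (Fin 3))) = {c0, c1, c2, c3, c4, c5} := by
    decide
  rw [huniv]
  rw [show ({c0, c1, c2, c3, c4, c5} : Finset (Equiv.Perm (Fin 3)))
      = insert c0 (insert c1 (insert c2 (insert c3 (insert c4 ({c5} : Finset _))))) from rfl]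
  rw [Finset.sum_insert (by decide), Finset.sum_insert (by decide),
    Finset.sum_insert (by decide), Finset.sum_insert (by decide),
    Finset.sum_insert (by decide), Finset.sum_singleton]
  have e0 : ∀ m : Fin 3, c0 m = ![(0:Fin 3),1,2] m := by decide
  have e1 : ∀ m : Fin 3, c1 m = ![(1:Fin 3),0,2] m := by decide
  have e2 : ∀ m : Fin 3, c2 m = ![(2:Fin 3),1,0] m := by decide
  have e3 : ∀ m : Fin 3, c3 m = ![(0:Fin 3),2,1] m := by decide
  have e4 : ∀ m : Fin 3, c4 m = ![(1:Fin 3),2,0] m := by decide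
  have e5 : ∀ m : Fin 3, c5 m = ![(2:Fin 3),0,1] m := by decide
  have s0 : Equiv.Perm.sign c0 = 1 := by decide
  have s1 : Equiv.Perm.sign c1 = -1 := by decide
  have s2 : Equiv.Perm.sign c2 = -1 := by decide
  have s3 : Equiv.Perm.sign c3 = -1 := by decide
  have s4 : Equiv.Perm.sign c4 = 1 := by decide
  have s5 : Equiv.Perm.sign c5 = 1 := by decide
  simp only [Fin.prod_univ_three, s0, s1, s2, s3, s4, s5]
  rw [show c0 0 = 0 by decide, show c0 1 = 1 by decide, show c0 2 = 2 by decide, show c1 0 = 1 by decide, show c1 1 = 0 by decide, show c1 2 = 2 by decide, show c2 0 = 2 by decide, show c2 1 = 1 by decide, show c2 2 = 0 by decide, show c3 0 = 0 by decide, show c3 1 = 2 by decide, show c3 2 = 1 by decide, show c4 0 = 1 by decide, show c4 1 = 2 by decide, show c4 2 = 0 by decide, show c5 0 = 2 by decide, show c5 1 = 0 by decide, show c5 2 = 1 by decide]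
  rw [dd3]
  push_cast [apply_ite (fun z : ℤ => (z : ℝ))]
  simp only [← ite3]
  ring
end DD3

-- === swap/esc bridge ===
lemma swap_succ : ∀ (k : Fin 4) (j : Fin 3), Equiv.swap (0 : Fin 4) k j.succ = esc k j := by
  decide

-- === evaluation of pf at basis-cons families ===
lemma pf_cons_eval (t : Fin 4 → Fin 8) (x : E8) (f : Fin 3 → Fin 8) :
    pf (fun k => s8 (t k)) (Fin.cons x fun m => s8 (f m))
      = ∑ k : Fin 4, ∑ e : Equiv.Perm (Fin 3),
          ((stz k : ℤ) : ℝ) * ((Equiv.Perm.sign e : ℤ) : ℝ) *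
            (x (t k) * ∏ m : Fin 3, if TT t k (e m) = f m then (1:ℝ) else 0) := by
  set z : Fin 4 → EuclideanSpace ℝ (Fin 8) := Fin.cons x (fun m => s8 (f m)) with hz
  have hprod : ∀ σ : Equiv.Perm (Fin 4),
      (∏ i, ⟪s8 (t i), z (σ i)⟫)
        = x (t (σ⁻¹ 0)) * ∏ m : Fin 3, (if t (σ⁻¹ m.succ) = f m then (1:ℝ) else 0) := by
    intro σ
    have h0 : (∏ i, ⟪s8 (t i), z (σ i)⟫)
        = ∏ j, ⟪s8 (t (σ⁻¹ j)), z j⟫ := by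
      rw [← Equiv.prod_comp σ (fun j => ⟪s8 (t (σ⁻¹ j)), z j⟫)]
      apply Finset.prod_congr rfl; intro i _
      simp
    rw [h0, Fin.prod_univ_succ]
    congr 1
    · rw [show z 0 = x from by simp [hz], inner_s8_left]
    · apply Finset.prod_congr rfl; intro m _
      rw [show z m.succ = s8 (f m) from by simp [hz], inner_s8_s8]
  rw [pf]
  simp only [hprod]
  -- reindex σ ↦ σ⁻¹
  rw [Fintype.sum_bijective (fun σ : Equiv.Perm (Fin 4) => σ⁻¹)
    (Function.Involutive.bijective (fun σ => inv_inv σ)) _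
    (fun π => ((Equiv.Perm.sign π : ℤ) : ℝ) *
      (x (t (π 0)) * ∏ m : Fin 3, (if t (π m.succ) = f m then (1:ℝ) else 0)))
    (fun σ => by simp [Equiv.Perm.sign_inv])]
  -- decompose
  rw [← Equiv.sum_comp (Equiv.Perm.decomposeFin.symm)
    (fun π => ((Equiv.Perm.sign π : ℤ) : ℝ) *
      (x (t (π 0)) * ∏ m : Fin 3, (if t (π m.succ) = f m then (1:ℝ) else 0))),
    Fintype.sum_prod_type]
  apply Finset.sum_congr rfl; intro k _
  apply Finset.sum_congr rfl; intro e _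
  have hsgn : ((Equiv.Perm.sign (Equiv.Perm.decomposeFin.symm (k, e)) : ℤ) : ℝ)
      = ((stz k : ℤ) : ℝ) * ((Equiv.Perm.sign e : ℤ) : ℝ) := by
    rw [Equiv.Perm.decomposeFin.symm_sign]
    by_cases hk : k = 0
    · simp [hk, show stz 0 = 1 from rfl]
    · have : stz k = -1 := by fin_cases k <;> simp_all <;> rfl
      simp [hk, this]
  rw [hsgn, Equiv.Perm.decomposeFin_symm_apply_zero]
  congr 1
  congr 1
  apply Finset.prod_congr rfl; intro m _
  rw [Equiv.Perm.decomposeFin_symm_apply_succ, swap_succ]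
  rfl
-- === contraction over the basis index f ===
lemma delta_sum (p q : Fin 8) :
    (∑ c : Fin 8, (if p = c then (1:ℝ) else 0) * (if q = c then (1:ℝ) else 0))
      = if p = q then (1:ℝ) else 0 := by
  by_cases h : p = q
  · subst h
    simp [← ite_and, Finset.sum_ite_eq]
  · rw [if_neg h]
    apply Finset.sum_eq_zero
    intro c _
    by_cases hc : p = c
    · subst hc
      rw [if_pos rfl, one_mul, if_neg fun hq : q = p => h hq.symm]
    · rw [if_neg hc, zero_mul]

lemma contract {ι κ : Type*} [Fintype ι] [Fintype κ]
    (u : ι → ℝ) (w : κ → ℝ) (P : ι → Fin 3 → Fin 8) (Q : κ → Fin 3 → Fin 8) :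
    ∑ f : Fin 3 → Fin 8,
        (∑ j, u j * ∏ m, if P j m = f m then (1:ℝ) else 0) *
        (∑ l, w l * ∏ m, if Q l m = f m then (1:ℝ) else 0)
      = ∑ j, ∑ l, u j * w l * ∏ m, if P j m = Q l m then (1:ℝ) else 0 := by
  have step1 : ∀ f : Fin 3 → Fin 8,
      (∑ j, u j * ∏ m, if P j m = f m then (1:ℝ) else 0) *
        (∑ l, w l * ∏ m, if Q l m = f m then (1:ℝ) else 0)
      = ∑ j, ∑ l, (u j * w l) *
          ∏ m, ((if P j m = f m then (1:ℝ) else 0) * (if Q l m = f m then (1:ℝ) else 0)) := by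
    intro f
    rw [Finset.sum_mul_sum]
    apply Finset.sum_congr rfl; intro j _
    apply Finset.sum_congr rfl; intro l _
    rw [Finset.prod_mul_distrib]
    ring
  rw [Finset.sum_congr rfl (fun f _ => step1 f)]
  rw [Finset.sum_comm]
  apply Finset.sum_congr rfl; intro j _
  rw [Finset.sum_comm]
  apply Finset.sum_congr rfl; intro l _
  rw [← Finset.mul_sum]
  congr 1
  have hpi : ∑ f : Fin 3 → Fin 8,
      ∏ m, ((if P j m = f m then (1:ℝ) else 0) * (if Q l m = f m then (1:ℝ) else 0))
      = ∏ m, ∑ c : Fin 8, ((if P j m = c then (1:ℝ) else 0) * (if Q l m = c then (1:ℝ) else 0)) := by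
    rw [Finset.prod_univ_sum]
    rw [← Fintype.piFinset_univ]
  rw [hpi]
  apply Finset.prod_congr rfl; intro m _
  exact delta_sum _ _

-- === collapsing the double S3 sum ===
lemma dd3_sum (p q : Fin 3 → Fin 8) :
    (∑ e : Equiv.Perm (Fin 3), ∑ e' : Equiv.Perm (Fin 3),
        ((Equiv.Perm.sign e : ℤ) : ℝ) * ((Equiv.Perm.sign e' : ℤ) : ℝ) *
          ∏ m : Fin 3, (if p (e m) = q (e' m) then (1:ℝ) else 0))
      = 6 * ((dd3 p q : ℤ) : ℝ) := by
  have inner6 : ∀ e : Equiv.Perm (Fin 3),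
      (∑ e' : Equiv.Perm (Fin 3),
        ((Equiv.Perm.sign e : ℤ) : ℝ) * ((Equiv.Perm.sign e' : ℤ) : ℝ) *
          ∏ m : Fin 3, (if p (e m) = q (e' m) then (1:ℝ) else 0))
      = ((dd3 p q : ℤ) : ℝ) := by
    intro e
    rw [← Equiv.sum_comp (Equiv.mulRight e)
      (fun e' : Equiv.Perm (Fin 3) => ((Equiv.Perm.sign e : ℤ) : ℝ) * ((Equiv.Perm.sign e' : ℤ) : ℝ) *
        ∏ m : Fin 3, (if p (e m) = q (e' m) then (1:ℝ) else 0))]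
    rw [← dd3_eq p q]
    apply Finset.sum_congr rfl; intro ρ _
    simp only [Equiv.coe_mulRight, Equiv.Perm.mul_apply]
    have hs : ((Equiv.Perm.sign e : ℤ) : ℝ) * ((Equiv.Perm.sign (ρ * e) : ℤ) : ℝ)
        = ((Equiv.Perm.sign ρ : ℤ) : ℝ) := by
      rw [Equiv.Perm.sign_mul]
      rcases Int.units_eq_one_or (Equiv.Perm.sign ρ) with h | h <;>
        rcases Int.units_eq_one_or (Equiv.Perm.sign e) with h' | h' <;> simp [h, h']
    have hp : (∏ m : Fin 3, (if p (e m) = q (ρ (e m)) then (1:ℝ) else 0))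
        = ∏ m : Fin 3, (if p m = q (ρ m) then (1:ℝ) else 0) :=
      Equiv.prod_comp e (fun m => if p m = q (ρ m) then (1:ℝ) else 0)
    rw [← hs]
    exact congrArg (HMul.hMul _) hp
  rw [Finset.sum_congr rfl (fun e _ => inner6 e), Finset.sum_const, Finset.card_univ,
    Fintype.card_perm, Fintype.card_fin, nsmul_eq_mul]
  norm_num [Nat.factorial]
-- === the middle form ===
def MID (g g' : ZMod 7 → Fin 4 → Fin 8) (x y : E8) : ℝ :=
  ∑ i : ZMod 7, ∑ k : Fin 4, ∑ i' : ZMod 7, ∑ k' : Fin 4,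
    (((stz k : ℤ) : ℝ) * x (g i k)) * (((stz k' : ℤ) : ℝ) * y (g' i' k')) *
      ((dd3 (TT (g i) k) (TT (g' i') k') : ℤ) : ℝ)

lemma block (g g' : ZMod 7 → Fin 4 → Fin 8) (x y : E8) :
    (∑ f : Fin 3 → Fin 8,
        (∑ i : ZMod 7, pf (fun k => s8 (g i k)) (Fin.cons x fun m => s8 (f m))) *
        (∑ i' : ZMod 7, pf (fun k => s8 (g' i' k)) (Fin.cons y fun m => s8 (f m))))
      = 6 * MID g g' x y := by
  have hx : ∀ (h : ZMod 7 → Fin 4 → Fin 8) (w : E8) (f : Fin 3 → Fin 8),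
      (∑ i : ZMod 7, pf (fun k => s8 (h i k)) (Fin.cons w fun m => s8 (f m)))
        = ∑ j : ZMod 7 × Fin 4 × Equiv.Perm (Fin 3),
            (((stz j.2.1 : ℤ) : ℝ) * ((Equiv.Perm.sign j.2.2 : ℤ) : ℝ) * w (h j.1 j.2.1)) *
              ∏ m, if TT (h j.1) j.2.1 (j.2.2 m) = f m then (1:ℝ) else 0 := by
    intro h w f
    rw [Fintype.sum_prod_type]
    apply Finset.sum_congr rfl; intro i _
    rw [pf_cons_eval, Fintype.sum_prod_type]
    apply Finset.sum_congr rfl; intro k _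
    apply Finset.sum_congr rfl; intro e _
    ring
  rw [Finset.sum_congr rfl (fun f _ => by rw [hx g x f, hx g' y f])]
  rw [contract
    (fun j : ZMod 7 × Fin 4 × Equiv.Perm (Fin 3) =>
      ((stz j.2.1 : ℤ) : ℝ) * ((Equiv.Perm.sign j.2.2 : ℤ) : ℝ) * x (g j.1 j.2.1))
    (fun l : ZMod 7 × Fin 4 × Equiv.Perm (Fin 3) =>
      ((stz l.2.1 : ℤ) : ℝ) * ((Equiv.Perm.sign l.2.2 : ℤ) : ℝ) * y (g' l.1 l.2.1))
    (fun j m => TT (g j.1) j.2.1 (j.2.2 m))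
    (fun l m => TT (g' l.1) l.2.1 (l.2.2 m))]
  calc (∑ j : ZMod 7 × Fin 4 × Equiv.Perm (Fin 3), ∑ l : ZMod 7 × Fin 4 × Equiv.Perm (Fin 3),
          (((stz j.2.1 : ℤ) : ℝ) * ((Equiv.Perm.sign j.2.2 : ℤ) : ℝ) * x (g j.1 j.2.1)) *
            (((stz l.2.1 : ℤ) : ℝ) * ((Equiv.Perm.sign l.2.2 : ℤ) : ℝ) * y (g' l.1 l.2.1)) *
            ∏ m, if TT (g j.1) j.2.1 (j.2.2 m) = TT (g' l.1) l.2.1 (l.2.2 m) then (1:ℝ) else 0)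
      = ∑ i : ZMod 7, ∑ k : Fin 4, ∑ e : Equiv.Perm (Fin 3), ∑ i' : ZMod 7, ∑ k' : Fin 4,
          ∑ e' : Equiv.Perm (Fin 3),
          (((stz k : ℤ) : ℝ) * ((Equiv.Perm.sign e : ℤ) : ℝ) * x (g i k)) *
            (((stz k' : ℤ) : ℝ) * ((Equiv.Perm.sign e' : ℤ) : ℝ) * y (g' i' k')) *
            ∏ m, if TT (g i) k (e m) = TT (g' i') k' (e' m) then (1:ℝ) else 0 := by
        rw [Fintype.sum_prod_type]
        apply Finset.sum_congr rfl; intro i _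
        rw [Fintype.sum_prod_type]
        apply Finset.sum_congr rfl; intro k _
        apply Finset.sum_congr rfl; intro e _
        rw [Fintype.sum_prod_type]
        apply Finset.sum_congr rfl; intro i' _
        rw [Fintype.sum_prod_type]
    _ = ∑ i : ZMod 7, ∑ k : Fin 4, ∑ i' : ZMod 7, ∑ k' : Fin 4, ∑ e : Equiv.Perm (Fin 3),
          ∑ e' : Equiv.Perm (Fin 3),
          (((stz k : ℤ) : ℝ) * ((Equiv.Perm.sign e : ℤ) : ℝ) * x (g i k)) *
            (((stz k' : ℤ) : ℝ) * ((Equiv.Perm.sign e' : ℤ) : ℝ) * y (g' i' k')) *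
            ∏ m, if TT (g i) k (e m) = TT (g' i') k' (e' m) then (1:ℝ) else 0 := by
        apply Finset.sum_congr rfl; intro i _
        apply Finset.sum_congr rfl; intro k _
        rw [Finset.sum_comm]
        apply Finset.sum_congr rfl; intro i' _
        rw [Finset.sum_comm]
    _ = ∑ i : ZMod 7, ∑ k : Fin 4, ∑ i' : ZMod 7, ∑ k' : Fin 4,
          6 * ((((stz k : ℤ) : ℝ) * x (g i k)) * (((stz k' : ℤ) : ℝ) * y (g' i' k')) *
            ((dd3 (TT (g i) k) (TT (g' i') k') : ℤ) : ℝ)) := by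
        apply Finset.sum_congr rfl; intro i _
        apply Finset.sum_congr rfl; intro k _
        apply Finset.sum_congr rfl; intro i' _
        apply Finset.sum_congr rfl; intro k' _
        have : (∑ e : Equiv.Perm (Fin 3), ∑ e' : Equiv.Perm (Fin 3),
            (((stz k : ℤ) : ℝ) * ((Equiv.Perm.sign e : ℤ) : ℝ) * x (g i k)) *
              (((stz k' : ℤ) : ℝ) * ((Equiv.Perm.sign e' : ℤ) : ℝ) * y (g' i' k')) *
              ∏ m, if TT (g i) k (e m) = TT (g' i') k' (e' m) then (1:ℝ) else 0)
            = (((stz k : ℤ) : ℝ) * x (g i k)) * (((stz k' : ℤ) : ℝ) * y (g' i' k')) *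
              (∑ e : Equiv.Perm (Fin 3), ∑ e' : Equiv.Perm (Fin 3),
                ((Equiv.Perm.sign e : ℤ) : ℝ) * ((Equiv.Perm.sign e' : ℤ) : ℝ) *
                  ∏ m, if TT (g i) k (e m) = TT (g' i') k' (e' m) then (1:ℝ) else 0) := by
          rw [Finset.mul_sum]
          apply Finset.sum_congr rfl; intro e _
          rw [Finset.mul_sum]
          apply Finset.sum_congr rfl; intro e' _
          ring
        rw [this, dd3_sum]
        ring
    _ = 6 * MID g g' x y := by
        rw [MID]
        simp only [Finset.mul_sum]
-- === coefficient extraction ===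
lemma ite_sum_pull {P : Prop} [Decidable P] {A : Type*} [Fintype A] (h : A → ℝ) :
    (∑ b : A, if P then h b else 0) = if P then (∑ b, h b) else 0 := by
  by_cases hP : P <;> simp [hP]

lemma pick (c : Fin 8) (h : Fin 8 → ℝ) : (∑ a, if c = a then h a else 0) = h c := by
  rw [Finset.sum_ite_eq]; simp

lemma swap_out3 {A C D : Type*} [Fintype A] [Fintype C] [Fintype D] (X : A → C → D → ℝ) :
    (∑ a : A, ∑ c : C, ∑ d : D, X a c d) = ∑ c : C, ∑ d : D, ∑ a : A, X a c d := by
  rw [Finset.sum_comm]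
  apply Finset.sum_congr rfl; intro c _
  rw [Finset.sum_comm]

lemma swap_out4 {A B C D : Type*} [Fintype A] [Fintype B] [Fintype C] [Fintype D]
    (X : A → B → C → D → ℝ) :
    (∑ a : A, ∑ b : B, ∑ c : C, ∑ d : D, X a b c d)
      = ∑ c : C, ∑ d : D, ∑ a : A, ∑ b : B, X a b c d := by
  rw [Finset.sum_congr rfl (fun a _ => swap_out3 (X a))]
  exact swap_out3 (fun a c d => ∑ b, X a b c d)

lemma coeff_expand (g g' : ZMod 7 → Fin 4 → Fin 8) (x y : E8) :
    (∑ a, ∑ b, x a * y b * ((Zs g g' a b : ℤ) : ℝ)) = MID g g' x y := by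
  have hcast : ∀ a b, ((Zs g g' a b : ℤ) : ℝ)
      = ∑ i : ZMod 7, ∑ k : Fin 4, if g i k = a then
          ((stz k : ℤ) : ℝ) * ∑ i' : ZMod 7, ∑ k' : Fin 4, (if g' i' k' = b then
            ((stz k' : ℤ) : ℝ) * ((dd3 (TT (g i) k) (TT (g' i') k') : ℤ) : ℝ) else 0) else 0 := by
    intro a b
    rw [Zs]
    push_cast [apply_ite (fun z : ℤ => (z : ℝ))]
    rfl
  calc (∑ a, ∑ b, x a * y b * ((Zs g g' a b : ℤ) : ℝ))
      = ∑ a, ∑ b, ∑ i : ZMod 7, ∑ k : Fin 4,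
          (if g i k = a then x a * y b * (((stz k : ℤ) : ℝ) *
            ∑ i' : ZMod 7, ∑ k' : Fin 4, (if g' i' k' = b then
              ((stz k' : ℤ) : ℝ) * ((dd3 (TT (g i) k) (TT (g' i') k') : ℤ) : ℝ) else 0)) else 0) := by
        apply Finset.sum_congr rfl; intro a _
        apply Finset.sum_congr rfl; intro b _
        rw [hcast a b, Finset.mul_sum]
        apply Finset.sum_congr rfl; intro i _
        rw [Finset.mul_sum]
        apply Finset.sum_congr rfl; intro k _
        rw [mul_ite, mul_zero]
    _ = ∑ i : ZMod 7, ∑ k : Fin 4, ∑ a, ∑ b,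
          (if g i k = a then x a * y b * (((stz k : ℤ) : ℝ) *
            ∑ i' : ZMod 7, ∑ k' : Fin 4, (if g' i' k' = b then
              ((stz k' : ℤ) : ℝ) * ((dd3 (TT (g i) k) (TT (g' i') k') : ℤ) : ℝ) else 0)) else 0) :=
        swap_out4 _
    _ = ∑ i : ZMod 7, ∑ k : Fin 4, ∑ b,
          x (g i k) * y b * (((stz k : ℤ) : ℝ) *
            ∑ i' : ZMod 7, ∑ k' : Fin 4, (if g' i' k' = b then
              ((stz k' : ℤ) : ℝ) * ((dd3 (TT (g i) k) (TT (g' i') k') : ℤ) : ℝ) else 0)) := by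
        apply Finset.sum_congr rfl; intro i _
        apply Finset.sum_congr rfl; intro k _
        rw [Finset.sum_comm]
        rw [Finset.sum_congr rfl (fun b _ => pick (g i k) _)]
    _ = ∑ i : ZMod 7, ∑ k : Fin 4, ∑ i' : ZMod 7, ∑ k' : Fin 4, ∑ b,
          (if g' i' k' = b then x (g i k) * y b * (((stz k : ℤ) : ℝ) *
              (((stz k' : ℤ) : ℝ) * ((dd3 (TT (g i) k) (TT (g' i') k') : ℤ) : ℝ))) else 0) := by
        apply Finset.sum_congr rfl; intro i _
        apply Finset.sum_congr rfl; intro k _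
        have h1 : ∀ b : Fin 8, x (g i k) * y b * (((stz k : ℤ) : ℝ) *
            ∑ i' : ZMod 7, ∑ k' : Fin 4, (if g' i' k' = b then
              ((stz k' : ℤ) : ℝ) * ((dd3 (TT (g i) k) (TT (g' i') k') : ℤ) : ℝ) else 0))
            = ∑ i' : ZMod 7, ∑ k' : Fin 4,
              (if g' i' k' = b then x (g i k) * y b * (((stz k : ℤ) : ℝ) *
                (((stz k' : ℤ) : ℝ) * ((dd3 (TT (g i) k) (TT (g' i') k') : ℤ) : ℝ))) else 0) := by
          intro b
          simp only [Finset.mul_sum, mul_ite, mul_zero]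
        rw [Finset.sum_congr rfl (fun b _ => h1 b)]
        exact swap_out3 _
    _ = MID g g' x y := by
        rw [MID]
        apply Finset.sum_congr rfl; intro i _
        apply Finset.sum_congr rfl; intro k _
        apply Finset.sum_congr rfl; intro i' _
        apply Finset.sum_congr rfl; intro k' _
        rw [pick (g' i' k') (fun b => x (g i k) * y b * (((stz k : ℤ) : ℝ) *
          (((stz k' : ℤ) : ℝ) * ((dd3 (TT (g i) k) (TT (g' i') k') : ℤ) : ℝ))))]
        ring
-- === Phi in pf form ===
lemma snoc3 (a b c d : E8) :
    (Fin.snoc (Fin.snoc (Fin.snoc ![a] b) c) d : Fin 4 → E8) = ![a, b, c, d] := by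
  funext k
  fin_cases k <;> simp [Fin.snoc]

lemma phi_pf (σ : ℝ) (z : Fin 4 → EuclideanSpace ℝ (Fin 8)) :
    Phi σ z = (∑ i : ZMod 7, pf (fun k => s8 (qA i k)) z)
      - σ * ∑ i : ZMod 7, pf (fun k => s8 (qB i k)) z := by
  have hA : ∀ i : ZMod 7,
      (dual e8 ⋏ dual (u7 i) ⋏ dual (u7 (i+1)) ⋏ dual (u7 (i+3))) = pf (fun k => s8 (qA i k)) := by
    intro i
    rw [dual_eq_pf, pf_step, pf_step, pf_step, snoc3]
    congr 1
    funext k; fin_cases k <;> rfl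
  have hB : ∀ i : ZMod 7,
      (dual (u7 (i+2)) ⋏ dual (u7 (i+4)) ⋏ dual (u7 (i+5)) ⋏ dual (u7 (i+6)))
        = pf (fun k => s8 (qB i k)) := by
    intro i
    rw [dual_eq_pf, pf_step, pf_step, pf_step, snoc3]
    congr 1
    funext k; fin_cases k <;> rfl
  have e1 : (∑ i : ZMod 7, (dual e8 ⋏ dual (u7 i) ⋏ dual (u7 (i+1)) ⋏ dual (u7 (i+3))) z)
      = ∑ i : ZMod 7, pf (fun k => s8 (qA i k)) z :=
    Finset.sum_congr rfl (fun i _ => by rw [hA i])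
  have e2 : (∑ i : ZMod 7,
        (dual (u7 (i+2)) ⋏ dual (u7 (i+4)) ⋏ dual (u7 (i+5)) ⋏ dual (u7 (i+6))) z)
      = ∑ i : ZMod 7, pf (fun k => s8 (qB i k)) z :=
    Finset.sum_congr rfl (fun i _ => by rw [hB i])
  rw [Phi, e1, e2]

-- === the two decidable coefficient identities ===
set_option maxRecDepth 40000 in
set_option maxHeartbeats 8000000 in
lemma coeffId_pos : ∀ a b : Fin 8,
    Zs qA qA a b - (Zs qA qB a b + Zs qB qA a b) + Zs qB qB a b
      = if a = b then 7 else 0 := by decide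

set_option maxRecDepth 40000 in
set_option maxHeartbeats 8000000 in
lemma coeffId_neg : ∀ a b : Fin 8,
    Zs qA qA a b + (Zs qA qB a b + Zs qB qA a b) + Zs qB qB a b
      = if a = b then 7 else 0 := by decide


-- === final assembly ===
lemma sum_comb (s : ℝ) (F G H K : Fin 8 → Fin 8 → ℝ) :
    ((∑ a, ∑ b, F a b) - s * (∑ a, ∑ b, G a b) - s * (∑ a, ∑ b, H a b) + (∑ a, ∑ b, K a b))
      = ∑ a, ∑ b, (F a b - s * G a b - s * H a b + K a b) := by
  simp only [Finset.mul_sum, ← Finset.sum_sub_distrib, ← Finset.sum_add_distrib]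

lemma main_calc (s : ℝ) (hs : s * s = 1) (x y : E8)
    (hco : ∀ a b : Fin 8,
      ((Zs qA qA a b : ℤ) : ℝ) - s * (((Zs qA qB a b : ℤ) : ℝ) + ((Zs qB qA a b : ℤ) : ℝ))
          + ((Zs qB qB a b : ℤ) : ℝ) = if a = b then (7:ℝ) else 0) :
    Form.inner' (Form.iprod x (Phi s) : Form 8 3) (Form.iprod y (Phi s) : Form 8 3)
      = 7 * ⟪x, y⟫ := by
  rw [Form.inner']
  have h36 : ((Nat.factorial 3 : ℕ) : ℝ)⁻¹ = (6 : ℝ)⁻¹ := by norm_num [Nat.factorial]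
  rw [h36]
  have hsummand : ∀ f : Fin 3 → Fin 8,
      (Form.iprod x (Phi s) : Form 8 3) (fun k => EuclideanSpace.single (f k) 1) *
        (Form.iprod y (Phi s) : Form 8 3) (fun k => EuclideanSpace.single (f k) 1)
      = ((∑ i : ZMod 7, pf (fun k => s8 (qA i k)) (Fin.cons x fun m => s8 (f m))) *
          (∑ i' : ZMod 7, pf (fun k => s8 (qA i' k)) (Fin.cons y fun m => s8 (f m))))
        - s * ((∑ i : ZMod 7, pf (fun k => s8 (qA i k)) (Fin.cons x fun m => s8 (f m))) *
          (∑ i' : ZMod 7, pf (fun k => s8 (qB i' k)) (Fin.cons y fun m => s8 (f m))))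
        - s * ((∑ i : ZMod 7, pf (fun k => s8 (qB i k)) (Fin.cons x fun m => s8 (f m))) *
          (∑ i' : ZMod 7, pf (fun k => s8 (qA i' k)) (Fin.cons y fun m => s8 (f m))))
        + (s * s) * ((∑ i : ZMod 7, pf (fun k => s8 (qB i k)) (Fin.cons x fun m => s8 (f m))) *
          (∑ i' : ZMod 7, pf (fun k => s8 (qB i' k)) (Fin.cons y fun m => s8 (f m)))) := by
    intro f
    have h1 : (Form.iprod x (Phi s) : Form 8 3) (fun k => EuclideanSpace.single (f k) 1)
        = Phi s (Fin.cons x fun m => s8 (f m)) := rfl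
    have h2 : (Form.iprod y (Phi s) : Form 8 3) (fun k => EuclideanSpace.single (f k) 1)
        = Phi s (Fin.cons y fun m => s8 (f m)) := rfl
    rw [h1, h2, phi_pf, phi_pf]
    ring
  rw [Finset.sum_congr rfl (fun f _ => hsummand f)]
  rw [Finset.sum_add_distrib, Finset.sum_sub_distrib, Finset.sum_sub_distrib,
    ← Finset.mul_sum, ← Finset.mul_sum, ← Finset.mul_sum]
  rw [block qA qA x y, block qA qB x y, block qB qA x y, block qB qB x y]
  rw [← coeff_expand qA qA x y, ← coeff_expand qA qB x y, ← coeff_expand qB qA x y,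
    ← coeff_expand qB qB x y]
  have hstep : (6:ℝ)⁻¹ *
      (6 * (∑ a, ∑ b, x a * y b * ((Zs qA qA a b : ℤ) : ℝ))
        - s * (6 * (∑ a, ∑ b, x a * y b * ((Zs qA qB a b : ℤ) : ℝ)))
        - s * (6 * (∑ a, ∑ b, x a * y b * ((Zs qB qA a b : ℤ) : ℝ)))
        + s * s * (6 * (∑ a, ∑ b, x a * y b * ((Zs qB qB a b : ℤ) : ℝ))))
      = (∑ a, ∑ b, x a * y b * ((Zs qA qA a b : ℤ) : ℝ))
        - s * (∑ a, ∑ b, x a * y b * ((Zs qA qB a b : ℤ) : ℝ))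
        - s * (∑ a, ∑ b, x a * y b * ((Zs qB qA a b : ℤ) : ℝ))
        + (∑ a, ∑ b, x a * y b * ((Zs qB qB a b : ℤ) : ℝ)) := by
    rw [hs]
    ring
  rw [hstep, sum_comb]
  have hfin : ∀ a b : Fin 8,
      x a * y b * ((Zs qA qA a b : ℤ) : ℝ) - s * (x a * y b * ((Zs qA qB a b : ℤ) : ℝ))
        - s * (x a * y b * ((Zs qB qA a b : ℤ) : ℝ)) + x a * y b * ((Zs qB qB a b : ℤ) : ℝ)
      = x a * y b * (if a = b then (7:ℝ) else 0) := by
    intro a b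
    rw [← hco a b]
    ring
  rw [Finset.sum_congr rfl (fun a _ => Finset.sum_congr rfl (fun b _ => hfin a b))]
  have hcollapse : ∀ a : Fin 8, (∑ b, x a * y b * (if a = b then (7:ℝ) else 0))
      = x a * y a * 7 := by
    intro a
    have : ∀ b : Fin 8, x a * y b * (if a = b then (7:ℝ) else 0)
        = if a = b then x a * y b * 7 else 0 := by
      intro b
      by_cases h : a = b <;> simp [h]
    rw [Finset.sum_congr rfl (fun b _ => this b)]
    exact pick a (fun b => x a * y b * 7)
  rw [Finset.sum_congr rfl (fun a _ => hcollapse a)]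
  rw [inner_eq_sum, Finset.mul_sum]
  apply Finset.sum_congr rfl; intro a _
  ring


/-- for all `x y : ℝ⁸`, `⟨x⌟Φ, y⌟Φ⟩ = 7⟨x,y⟩`. -/
theorem stmt1 (σ : ℝ) (hσ : σ = 1 ∨ σ = -1) (x y : E8) :
    Form.inner' (Form.iprod x (Phi σ) : Form 8 3) (Form.iprod y (Phi σ) : Form 8 3)
      = 7 * ⟪x, y⟫ := by
  rcases hσ with h | h <;> subst h
  · apply main_calc 1 (by norm_num) x y
    intro a b
    have h := congrArg (fun z : ℤ => (z : ℝ)) (coeffId_pos a b)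
    push_cast [apply_ite (fun z : ℤ => (z : ℝ))] at h
    linear_combination h
  · apply main_calc (-1) (by norm_num) x y
    intro a b
    have h := congrArg (fun z : ℤ => (z : ℝ)) (coeffId_neg a b)
    push_cast [apply_ite (fun z : ℤ => (z : ℝ))] at h
    linear_combination h
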